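/- (Lemma 3.2(ii)–(iii), decrease and limit value of the reduced merit function) Let K, I* be as in the stable-support property, set δ^k_i = √(ε^k_i), and define the reduced merit function ψ(x_{I*}, y_{I*}, δ_{I*}) = f(x) + λ Σ_{i∈I*} (|x_i| + δ_i²)^p + (β/2) Σ_{i∈I*} (x_i − y_i)², where x has components x_i for i ∈ I* and x_i = 0 for i ∉ I*. Then with D₂ = β(1 − ᾱ²)/2 > 0, the sequence {ψ(x^k_{I*}, x^{k−1}_{I*}, δ^k_{I*})} is monotonically decreasing with ψ(x^k_{I*}, x^{k−1}_{I*}, δ^k_{I*}) − ψ(x^{k+1}_{I*}, x^k_{I*}, δ^{k+1}_{I*}) ≥ D₂ ‖x^k_{I*} − x^{k−1}_{I*}‖₂² for all sufficiently large k; it converges to a limit ζ, and ψ(x*_{I*}, x*_{I*}, 0_{I*}) = ζ for every cluster point x* of {x^k}. -/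

import Mathlib

open Filter
open scoped BigOperators InnerProductSpace

noncomputable section

/-- Real n-dimensional Euclidean space. -/
abbrev Vec (n : ℕ) := EuclideanSpace ℝ (Fin n)

/-- The smoothed objective `F(x, ε) = f(x) + λ ∑ᵢ (|xᵢ| + εᵢ)^p`. -/
def Fobj (n : ℕ) (p lam : ℝ) (f : Vec n → ℝ) (z : Vec n) (ε : Fin n → ℝ) : ℝ :=
  f z + lam * ∑ i, (|z i| + ε i) ^ p

/-- The merit function `ψ(x, y, ε) = F(x, ε) + (β/2)‖x − y‖²`. -/
def psiObj (n : ℕ) (p lam β : ℝ) (f : Vec n → ℝ) (z y : Vec n) (ε : Fin n → ℝ) : ℝ :=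
  Fobj n p lam f z ε + β / 2 * ‖z - y‖ ^ 2

/-- The weighted-ℓ₁ subproblem objective at iteration `k`:
`⟨∇f(yₖ), z⟩ + (β/2)‖z − yₖ‖² + λ ∑ᵢ wᵢᵏ |zᵢ|` with `wᵢᵏ = p(|xᵢᵏ| + εᵢᵏ)^{p−1}`. -/
def subObj (n : ℕ) (p lam β : ℝ) (f : Vec n → ℝ) (xk yk : Vec n) (εk : Fin n → ℝ)
    (z : Vec n) : ℝ :=
  ⟪gradient f yk, z⟫_ℝ + β / 2 * ‖z - yk‖ ^ 2
    + lam * ∑ i, (p * (|xk i| + εk i) ^ (p - 1)) * |z i|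

/-- All the hypotheses of the EIRL1 algorithm (Algorithm 1) together with
Assumption 2.1.  The convention `x⁻¹ = x⁰` is encoded through truncated
subtraction on ℕ (`x (k-1) = x 0` for `k = 0`). -/
structure EIRL1 (n : ℕ) (p lam β Lf μ αbar : ℝ) (f : Vec n → ℝ)
    (x y : ℕ → Vec n) (ε : ℕ → Fin n → ℝ) (α : ℕ → ℝ) : Prop where
  hn : 1 ≤ n
  hp0 : 0 < p
  hp1 : p < 1
  hlam : 0 < lam
  hμ0 : 0 < μ
  hμ1 : μ < 1
  hLf : 0 ≤ Lf
  hβ : Lf < β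
  hconv : ConvexOn ℝ Set.univ f
  hdiff : ContDiff ℝ 1 f
  hlip : ∀ a b, ‖gradient f a - gradient f b‖ ≤ Lf * ‖a - b‖
  hαbar0 : 0 ≤ αbar
  hαbar1 : αbar < 1
  hα0 : ∀ k, 0 ≤ α k
  hα1 : ∀ k, α k ≤ αbar
  hε0 : ∀ i, 0 < ε 0 i
  hεpos : ∀ k i, 0 < ε (k + 1) i
  hεdec : ∀ k i, ε (k + 1) i ≤ μ * ε k i
  hy : ∀ k, y k = x k + α k • (x k - x (k - 1))
  hmin : ∀ k z, z ≠ x (k + 1) →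
    subObj n p lam β f (x k) (y k) (ε k) (x (k + 1)) < subObj n p lam β f (x k) (y k) (ε k) z
  hlevel : Bornology.IsBounded {z : Vec n | Fobj n p lam f z 0 ≤ Fobj n p lam f (x 0) (ε 0)}

/-- Index type for the triple `(x_{I*}, y_{I*}, δ_{I*})` of reduced variables. -/
abbrev Idx3 {n : ℕ} (Istar : Finset (Fin n)) :=
  ({i // i ∈ Istar} ⊕ ({i // i ∈ Istar} ⊕ {i // i ∈ Istar}))

/-- Embedding of a reduced vector into `ℝⁿ`, filling coordinates outside `I*` with `0`. -/
def embedI {n : ℕ} (Istar : Finset (Fin n)) (u : {i // i ∈ Istar} → ℝ) : Vec n :=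
  WithLp.toLp 2 (fun i => if h : i ∈ Istar then u ⟨i, h⟩ else 0)

/-- The reduced merit function
`ψ(x_{I*}, y_{I*}, δ_{I*}) = f(x) + λ ∑_{i∈I*} (|xᵢ| + δᵢ²)^p + (β/2) ∑_{i∈I*} (xᵢ − yᵢ)²`,
viewed as a smooth function on the Euclidean space indexed by three copies of `I*`
(the full vector `x` has `xᵢ = 0` for `i ∉ I*`). -/
def redPsi (n : ℕ) (p lam β : ℝ) (f : Vec n → ℝ) (Istar : Finset (Fin n))
    (z : EuclideanSpace ℝ (Idx3 Istar)) : ℝ :=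
  f (embedI Istar fun i => z (Sum.inl i))
    + lam * ∑ i : {i // i ∈ Istar}, (|z (Sum.inl i)| + (z (Sum.inr (Sum.inr i))) ^ 2) ^ p
    + β / 2 * ∑ i : {i // i ∈ Istar}, (z (Sum.inl i) - z (Sum.inr (Sum.inl i))) ^ 2

/-- The point `(x^k_{I*}, x^{k−1}_{I*}, δ^k_{I*})` with `δᵢᵏ = √εᵢᵏ`. -/
def zpt {n : ℕ} (Istar : Finset (Fin n)) (x : ℕ → Vec n) (ε : ℕ → Fin n → ℝ) (k : ℕ) :
    EuclideanSpace ℝ (Idx3 Istar) :=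
  WithLp.toLp 2 (Sum.elim (fun i => x k i.1)
    (Sum.elim (fun i => x (k - 1) i.1) (fun i => Real.sqrt (ε k i.1))))

/-- The point `(x*_{I*}, x*_{I*}, 0_{I*})` attached to a (cluster/limit) point `x*`. -/
def zstarPt {n : ℕ} (Istar : Finset (Fin n)) (xstar : Vec n) :
    EuclideanSpace ℝ (Idx3 Istar) :=
  WithLp.toLp 2 (Sum.elim (fun i => xstar i.1) (Sum.elim (fun i => xstar i.1) fun _ => 0))

/-- Euclidean norm of a vector restricted to the coordinates in `I*`. -/
def normOn {n : ℕ} (Istar : Finset (Fin n)) (v : Fin n → ℝ) : ℝ :=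
  Real.sqrt (∑ i ∈ Istar, v i ^ 2)

-- derivative along a line
lemma line_hasDerivAt {n : ℕ} (f : Vec n → ℝ) (hdiff : ContDiff ℝ 1 f) (a v : Vec n) (t : ℝ) :
    HasDerivAt (fun s : ℝ => f (a + s • v)) ⟪gradient f (a + t • v), v⟫_ℝ t := by
  have hc : HasDerivAt (fun s : ℝ => a + s • v) v t := by
    simpa using ((hasDerivAt_id t).smul_const v).const_add a
  have hf : HasFDerivAt f (InnerProductSpace.toDual ℝ (Vec n) (gradient f (a + t • v)))
      (a + t • v) :=
    ((hdiff.differentiable one_ne_zero) (a + t • v)).hasGradientAt.hasFDerivAt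
  exact hf.comp_hasDerivAt t hc

-- convex gradient inequality
lemma grad_ineq {n : ℕ} (f : Vec n → ℝ) (hconv : ConvexOn ℝ Set.univ f)
    (hdiff : ContDiff ℝ 1 f) (a b : Vec n) :
    f a + ⟪gradient f a, b - a⟫_ℝ ≤ f b := by
  set g : ℝ → ℝ := fun s => f (a + s • (b - a)) with hg
  have hgc : ConvexOn ℝ Set.univ g := by
    have h2 := hconv.comp_affineMap (AffineMap.lineMap a b)
    have he : f ∘ (AffineMap.lineMap a b) = g := by
      funext s
      simp [hg, AffineMap.lineMap_apply, add_comm]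
    simpa [he] using h2
  have hd0 : HasDerivAt g ⟪gradient f a, b - a⟫_ℝ 0 := by
    simpa using line_hasDerivAt f hdiff a (b - a) 0
  have h := hgc.deriv_le_slope (Set.mem_univ (0:ℝ)) (Set.mem_univ (1:ℝ)) one_pos
      hd0.differentiableAt
  rw [hd0.deriv] at h
  have hs : slope g 0 1 = g 1 - g 0 := by simp [slope_def_field]
  rw [hs] at h
  have hg1 : g 1 = f b := by simp [hg]
  have hg0 : g 0 = f a := by simp [hg]
  rw [hg1, hg0] at h
  linarith

-- descent lemma
lemma descent_lemma {n : ℕ} (f : Vec n → ℝ) (Lf : ℝ) (hLf : 0 ≤ Lf)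
    (hdiff : ContDiff ℝ 1 f)
    (hlip : ∀ a b, ‖gradient f a - gradient f b‖ ≤ Lf * ‖a - b‖) (a b : Vec n) :
    f b ≤ f a + ⟪gradient f a, b - a⟫_ℝ + Lf / 2 * ‖b - a‖ ^ 2 := by
  set v : Vec n := b - a with hv
  set g : ℝ → ℝ := fun s =>
    f (a + s • v) - s * ⟪gradient f a, v⟫_ℝ - s ^ 2 * (Lf / 2 * ‖v‖ ^ 2) with hg
  have hder : ∀ t : ℝ, HasDerivAt g
      (⟪gradient f (a + t • v), v⟫_ℝ - ⟪gradient f a, v⟫_ℝ - 2 * t * (Lf / 2 * ‖v‖ ^ 2)) t := by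
    intro t
    have h1 := line_hasDerivAt f hdiff a v t
    have h2 : HasDerivAt (fun s : ℝ => s * ⟪gradient f a, v⟫_ℝ) ⟪gradient f a, v⟫_ℝ t := by
      simpa using (hasDerivAt_id t).mul_const ⟪gradient f a, v⟫_ℝ
    have h3 : HasDerivAt (fun s : ℝ => s ^ 2 * (Lf / 2 * ‖v‖ ^ 2))
        (2 * t * (Lf / 2 * ‖v‖ ^ 2)) t := by
      have := (hasDerivAt_pow 2 t).mul_const (Lf / 2 * ‖v‖ ^ 2)
      simpa [pow_one] using this
    exact (h1.sub h2).sub h3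
  have hmono : g 1 ≤ g 0 := by
    have hanti : AntitoneOn g (Set.Icc (0:ℝ) 1) := by
      apply antitoneOn_of_deriv_nonpos (convex_Icc 0 1)
      · exact fun t _ => ((hder t).continuousAt).continuousWithinAt
      · intro t _
        exact (hder t).differentiableAt.differentiableWithinAt
      · intro t ht
        rw [interior_Icc] at ht
        rw [(hder t).deriv]
        have hb : ⟪gradient f (a + t • v) - gradient f a, v⟫_ℝ
            ≤ ‖gradient f (a + t • v) - gradient f a‖ * ‖v‖ := real_inner_le_norm _ _
        have hl : ‖gradient f (a + t • v) - gradient f a‖ ≤ Lf * (t * ‖v‖) := by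
          have := hlip (a + t • v) a
          simpa [norm_smul, abs_of_nonneg ht.1.le, mul_assoc] using this
        have hineq : ⟪gradient f (a + t • v), v⟫_ℝ - ⟪gradient f a, v⟫_ℝ
            ≤ Lf * t * ‖v‖ ^ 2 := by
          rw [← inner_sub_left]
          calc ⟪gradient f (a + t • v) - gradient f a, v⟫_ℝ
              ≤ ‖gradient f (a + t • v) - gradient f a‖ * ‖v‖ := hb
            _ ≤ Lf * (t * ‖v‖) * ‖v‖ := by
                apply mul_le_mul_of_nonneg_right hl (norm_nonneg _)
            _ = Lf * t * ‖v‖ ^ 2 := by ring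
        nlinarith [norm_nonneg v]
    exact hanti (by norm_num : (0:ℝ) ∈ Set.Icc (0:ℝ) 1)
      (by norm_num : (1:ℝ) ∈ Set.Icc (0:ℝ) 1) zero_le_one
  have hg1 : g 1 = f b - ⟪gradient f a, v⟫_ℝ - Lf / 2 * ‖v‖ ^ 2 := by
    simp [hg, hv]
  have hg0 : g 0 = f a := by simp [hg]
  rw [hg1, hg0] at hmono
  linarith

-- concavity tangent line for rpow
lemma rpow_tangent {p a b : ℝ} (hp0 : 0 < p) (hp1 : p < 1) (ha : 0 < a) (hb : 0 ≤ b) :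
    b ^ p ≤ a ^ p + p * a ^ (p - 1) * (b - a) := by
  have hs : (-1 : ℝ) ≤ (b - a) / a := by
    rw [le_div_iff₀ ha]; linarith
  have hbern := rpow_one_add_le_one_add_mul_self hs hp0.le hp1.le
  have hb' : b = a * (1 + (b - a) / a) := by field_simp; ring
  have h1 : (1 : ℝ) + (b - a) / a = b / a := by field_simp; ring
  have hba : 0 ≤ 1 + (b - a) / a := by rw [h1]; positivity
  calc b ^ p = (a * (1 + (b - a) / a)) ^ p := by rw [← hb']
    _ = a ^ p * (1 + (b - a) / a) ^ p := Real.mul_rpow ha.le hba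
    _ ≤ a ^ p * (1 + p * ((b - a) / a)) := by
        apply mul_le_mul_of_nonneg_left hbern (Real.rpow_nonneg ha.le p)
    _ = a ^ p + p * (a ^ p / a) * (b - a) := by field_simp
    _ = a ^ p + p * a ^ (p - 1) * (b - a) := by
        rw [Real.rpow_sub ha, Real.rpow_one]

lemma norm_combo {E : Type*} [NormedAddCommGroup E] [InnerProductSpace ℝ E]
    (u w : E) (t : ℝ) :
    ‖u + t • w‖ ^ 2 = ‖u‖ ^ 2 + t * (‖u + w‖ ^ 2 - ‖u‖ ^ 2) - t * (1 - t) * ‖w‖ ^ 2 := by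
  rw [norm_add_sq_real, norm_add_sq_real, real_inner_smul_right, norm_smul]
  simp only [Real.norm_eq_abs, mul_pow, sq_abs]
  ring

lemma subObj_combo {n : ℕ} (p lam β : ℝ) (f : Vec n → ℝ) (xk yk : Vec n) (εk : Fin n → ℝ)
    (hp : 0 ≤ p) (hlam : 0 ≤ lam) (hε : ∀ i, 0 ≤ εk i)
    (a b : Vec n) {t : ℝ} (ht0 : 0 ≤ t) (ht1 : t ≤ 1) :
    subObj n p lam β f xk yk εk (a + t • (b - a))
      ≤ subObj n p lam β f xk yk εk a
        + t * (subObj n p lam β f xk yk εk b - subObj n p lam β f xk yk εk a)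
        - β / 2 * t * (1 - t) * ‖b - a‖ ^ 2 := by
  have hinner : ⟪gradient f yk, a + t • (b - a)⟫_ℝ
      = ⟪gradient f yk, a⟫_ℝ + t * (⟪gradient f yk, b⟫_ℝ - ⟪gradient f yk, a⟫_ℝ) := by
    rw [inner_add_right, real_inner_smul_right, inner_sub_right]
  have hquad : ‖a + t • (b - a) - yk‖ ^ 2
      = ‖a - yk‖ ^ 2 + t * (‖b - yk‖ ^ 2 - ‖a - yk‖ ^ 2) - t * (1 - t) * ‖b - a‖ ^ 2 := by
    have e1 : a + t • (b - a) - yk = (a - yk) + t • (b - a) := by abel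
    have e2 : b - yk = (a - yk) + (b - a) := by abel
    rw [e1, e2, norm_combo]
  have hl1 : ∀ i, (p * (|xk i| + εk i) ^ (p - 1)) * |(a + t • (b - a)) i|
      ≤ (p * (|xk i| + εk i) ^ (p - 1)) * ((1 - t) * |a i| + t * |b i|) := by
    intro i
    have hw : 0 ≤ p * (|xk i| + εk i) ^ (p - 1) :=
      mul_nonneg hp (Real.rpow_nonneg (add_nonneg (abs_nonneg _) (hε i)) _)
    apply mul_le_mul_of_nonneg_left _ hw
    have : (a + t • (b - a)) i = (1 - t) * a i + t * b i := by
      simp [PiLp.add_apply, PiLp.smul_apply, PiLp.sub_apply, smul_eq_mul]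
      ring
    rw [this]
    calc |(1 - t) * a i + t * b i| ≤ |(1 - t) * a i| + |t * b i| := abs_add_le _ _
      _ = (1 - t) * |a i| + t * |b i| := by
          rw [abs_mul, abs_mul, abs_of_nonneg (by linarith), abs_of_nonneg ht0]
  have hsum : ∑ i, (p * (|xk i| + εk i) ^ (p - 1)) * |(a + t • (b - a)) i|
      ≤ ∑ i, (p * (|xk i| + εk i) ^ (p - 1)) * ((1 - t) * |a i| + t * |b i|) :=
    Finset.sum_le_sum fun i _ => hl1 i
  have hsplit : ∑ i, (p * (|xk i| + εk i) ^ (p - 1)) * ((1 - t) * |a i| + t * |b i|)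
      = (1 - t) * (∑ i, (p * (|xk i| + εk i) ^ (p - 1)) * |a i|)
        + t * (∑ i, (p * (|xk i| + εk i) ^ (p - 1)) * |b i|) := by
    rw [Finset.mul_sum, Finset.mul_sum, ← Finset.sum_add_distrib]
    congr 1; funext i; ring
  simp only [subObj]
  rw [hinner, hquad]
  have := mul_le_mul_of_nonneg_left (hsum.trans hsplit.le) hlam
  nlinarith [this]

lemma strong_min {n : ℕ} (p lam β : ℝ) (f : Vec n → ℝ) (xk yk xp : Vec n) (εk : Fin n → ℝ)
    (hp : 0 ≤ p) (hlam : 0 ≤ lam) (hβ : 0 ≤ β) (hε : ∀ i, 0 ≤ εk i)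
    (hmin : ∀ z, z ≠ xp → subObj n p lam β f xk yk εk xp < subObj n p lam β f xk yk εk z)
    (z : Vec n) :
    subObj n p lam β f xk yk εk xp + β / 2 * ‖z - xp‖ ^ 2
      ≤ subObj n p lam β f xk yk εk z := by
  set obj := subObj n p lam β f xk yk εk with hobj
  set c := ‖z - xp‖ ^ 2 with hc
  have key : ∀ t ∈ Set.Ioo (0:ℝ) 1, obj xp + β / 2 * (1 - t) * c ≤ obj z := by
    intro t ht
    have hcombo := subObj_combo p lam β f xk yk εk hp hlam hε xp z ht.1.le ht.2.le
    have hge : obj xp ≤ obj (xp + t • (z - xp)) := by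
      by_cases he : xp + t • (z - xp) = xp
      · rw [he]
      · exact (hmin _ he).le
    have h0 : 0 ≤ t * (obj z - obj xp - β / 2 * (1 - t) * c) := by
      rw [hc]; nlinarith [hge.trans hcombo]
    have := (mul_nonneg_iff_of_pos_left ht.1).mp h0
    linarith
  have hT : Tendsto (fun t : ℝ => obj xp + β / 2 * (1 - t) * c) (nhdsWithin 0 (Set.Ioi 0))
      (nhds (obj xp + β / 2 * c)) := by
    have hcont : Continuous (fun t : ℝ => obj xp + β / 2 * (1 - t) * c) := by continuity
    have h2 : Tendsto (fun t : ℝ => obj xp + β / 2 * (1 - t) * c)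
        (nhdsWithin 0 (Set.Ioi 0)) (nhds (obj xp + β / 2 * (1 - 0) * c)) :=
      ((hcont.tendsto 0).mono_left (nhdsWithin_le_nhds (s := Set.Ioi 0)))
    simpa using h2
  exact le_of_tendsto hT (Filter.eventually_of_mem
    (Ioo_mem_nhdsGT_of_mem ⟨le_refl 0, one_pos⟩) key)



lemma eps_pos {n : ℕ} {p lam β Lf μ αbar : ℝ} {f : Vec n → ℝ}
    {x y : ℕ → Vec n} {ε : ℕ → Fin n → ℝ} {α : ℕ → ℝ}
    (H : EIRL1 n p lam β Lf μ αbar f x y ε α) : ∀ k i, 0 < ε k i := by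
  intro k i
  cases k with
  | zero => exact H.hε0 i
  | succ m => exact H.hεpos m i

set_option maxHeartbeats 1000000 in
lemma core_decrease {n : ℕ} {p lam β Lf μ αbar : ℝ} {f : Vec n → ℝ}
    {x y : ℕ → Vec n} {ε : ℕ → Fin n → ℝ} {α : ℕ → ℝ}
    (H : EIRL1 n p lam β Lf μ αbar f x y ε α) (k : ℕ) (S : Finset (Fin n))
    (hS : ∀ i ∉ S, x k i = 0 ∧ x (k + 1) i = 0) :
    f (x (k + 1)) + lam * ∑ i ∈ S, (|x (k + 1) i| + ε (k + 1) i) ^ p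
        + β / 2 * ‖x (k + 1) - x k‖ ^ 2
      ≤ f (x k) + lam * ∑ i ∈ S, (|x k i| + ε k i) ^ p
        + β * (α k) ^ 2 / 2 * ‖x k - x (k - 1)‖ ^ 2 := by
  have hεpos := eps_pos H
  set g := gradient f (y k) with hgdef
  set xp := x (k + 1) with hxp
  set xk := x k with hxk
  set yk := y k with hyk
  -- strong minimality at z = x k
  have hsm := strong_min p lam β f xk yk xp (ε k) H.hp0.le H.hlam.le
    (le_of_lt (lt_of_le_of_lt H.hLf H.hβ)) (fun i => (hεpos k i).le)
    (fun z hz => H.hmin k z hz) xk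
  simp only [subObj] at hsm
  -- descent lemma and convexity
  have hdes := descent_lemma f Lf H.hLf H.hdiff H.hlip yk xp
  have hcvx := grad_ineq f H.hconv H.hdiff yk xk
  have e1 : ⟪gradient f yk, xp - yk⟫_ℝ = ⟪gradient f yk, xp⟫_ℝ - ⟪gradient f yk, yk⟫_ℝ :=
    inner_sub_right _ _ _
  have e2 : ⟪gradient f yk, xk - yk⟫_ℝ = ⟪gradient f yk, xk⟫_ℝ - ⟪gradient f yk, yk⟫_ℝ :=
    inner_sub_right _ _ _
  rw [e1] at hdes
  rw [e2] at hcvx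
  -- the weighted-l1 sums restrict to S
  have hresk : ∑ i, (p * (|xk i| + ε k i) ^ (p - 1)) * |xk i|
      = ∑ i ∈ S, (p * (|xk i| + ε k i) ^ (p - 1)) * |xk i| := by
    symm
    apply Finset.sum_subset (Finset.subset_univ S)
    intro i _ hi
    rw [(hS i hi).1, abs_zero, mul_zero]
  have hresp : ∑ i, (p * (|xk i| + ε k i) ^ (p - 1)) * |xp i|
      = ∑ i ∈ S, (p * (|xk i| + ε k i) ^ (p - 1)) * |xp i| := by
    symm
    apply Finset.sum_subset (Finset.subset_univ S)
    intro i _ hi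
    rw [(hS i hi).2, abs_zero, mul_zero]
  rw [hresk, hresp] at hsm
  -- concavity bound per coordinate
  have hconc : ∑ i ∈ S, (|xp i| + ε (k + 1) i) ^ p
      ≤ ∑ i ∈ S, (|xk i| + ε k i) ^ p
        + (∑ i ∈ S, (p * (|xk i| + ε k i) ^ (p - 1)) * |xp i|
           - ∑ i ∈ S, (p * (|xk i| + ε k i) ^ (p - 1)) * |xk i|) := by
    rw [← Finset.sum_sub_distrib, ← Finset.sum_add_distrib]
    apply Finset.sum_le_sum
    intro i _
    have ha : 0 < |xk i| + ε k i := by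
      have := hεpos k i
      have := abs_nonneg (xk i)
      linarith
    have hb : 0 ≤ |xp i| + ε (k + 1) i := by
      have := (hεpos (k + 1) i).le
      have := abs_nonneg (xp i)
      linarith
    have ht := rpow_tangent H.hp0 H.hp1 ha hb
    have hw : 0 ≤ p * (|xk i| + ε k i) ^ (p - 1) :=
      mul_nonneg H.hp0.le (Real.rpow_nonneg ha.le _)
    have hεd : ε (k + 1) i ≤ ε k i :=
      le_trans (H.hεdec k i) (by nlinarith [hεpos k i, H.hμ1])
    have hmul : p * (|xk i| + ε k i) ^ (p - 1) * (|xp i| + ε (k + 1) i - (|xk i| + ε k i))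
        ≤ p * (|xk i| + ε k i) ^ (p - 1) * (|xp i| - |xk i|) := by
      apply mul_le_mul_of_nonneg_left _ hw
      linarith
    calc (|xp i| + ε (k + 1) i) ^ p
        ≤ (|xk i| + ε k i) ^ p
          + p * (|xk i| + ε k i) ^ (p - 1) * (|xp i| + ε (k + 1) i - (|xk i| + ε k i)) := ht
      _ ≤ (|xk i| + ε k i) ^ p
          + (p * (|xk i| + ε k i) ^ (p - 1) * |xp i|
             - p * (|xk i| + ε k i) ^ (p - 1) * |xk i|) := by
          rw [mul_sub] at hmul
          linarith
  -- norm relations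
  have hnormq : ‖xk - yk‖ ^ 2 = (α k) ^ 2 * ‖xk - x (k - 1)‖ ^ 2 := by
    have : xk - yk = -(α k • (xk - x (k - 1))) := by
      rw [hyk, H.hy k]
      abel
    rw [this, norm_neg, norm_smul, Real.norm_eq_abs, mul_pow, sq_abs]
  have hrev : ‖xk - xp‖ = ‖xp - xk‖ := norm_sub_rev _ _
  have hβLf : 0 ≤ (β - Lf) / 2 * ‖xp - yk‖ ^ 2 := by
    have h1 : 0 ≤ β - Lf := by linarith [H.hβ]
    positivity
  have hlamconc := mul_le_mul_of_nonneg_left hconc H.hlam.le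
  rw [mul_add, mul_sub] at hlamconc
  have hq : ‖xk - xp‖ ^ 2 = ‖xp - xk‖ ^ 2 := by rw [hrev]
  rw [hq, hnormq] at hsm
  linarith [hsm, hdes, hcvx, hlamconc, hβLf]



lemma bounded_below {n : ℕ} {p lam β Lf μ αbar : ℝ} {f : Vec n → ℝ}
    {x y : ℕ → Vec n} {ε : ℕ → Fin n → ℝ} {α : ℕ → ℝ}
    (H : EIRL1 n p lam β Lf μ αbar f x y ε α) : ∃ C : ℝ, ∀ k, C ≤ f (x k) := by
  have hεpos := eps_pos H
  have hβpos : 0 < β := lt_of_le_of_lt H.hLf H.hβ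
  set φ : ℕ → ℝ := fun k =>
    f (x k) + lam * ∑ i, (|x k i| + ε k i) ^ p + β / 2 * ‖x k - x (k - 1)‖ ^ 2 with hφ
  have hstep : ∀ k, φ (k + 1) ≤ φ k := by
    intro k
    have hc := core_decrease H k Finset.univ (by simp)
    have hα2 : (α k) ^ 2 ≤ 1 := by
      have h0 := H.hα0 k
      have h1 := (H.hα1 k).trans (le_of_lt H.hαbar1)
      nlinarith
    have hα3 : β * (α k) ^ 2 / 2 * ‖x k - x (k - 1)‖ ^ 2
        ≤ β / 2 * ‖x k - x (k - 1)‖ ^ 2 := by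
      have hn : (0:ℝ) ≤ ‖x k - x (k - 1)‖ ^ 2 := sq_nonneg _
      nlinarith [mul_nonneg (mul_nonneg hβpos.le (sub_nonneg.mpr hα2)) hn]
    have he : (k + 1 : ℕ) - 1 = k := rfl
    simp only [hφ, he]
    calc f (x (k + 1)) + lam * ∑ i, (|x (k + 1) i| + ε (k + 1) i) ^ p
          + β / 2 * ‖x (k + 1) - x k‖ ^ 2
        ≤ f (x k) + lam * ∑ i, (|x k i| + ε k i) ^ p
          + β * (α k) ^ 2 / 2 * ‖x k - x (k - 1)‖ ^ 2 := by
          simpa using hc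
      _ ≤ f (x k) + lam * ∑ i, (|x k i| + ε k i) ^ p
          + β / 2 * ‖x k - x (k - 1)‖ ^ 2 := by linarith
  have hmon : ∀ k, φ k ≤ φ 0 := by
    intro k
    induction k with
    | zero => exact le_rfl
    | succ m ih => exact (hstep m).trans ih
  have hφ0 : φ 0 = Fobj n p lam f (x 0) (ε 0) := by
    simp [hφ, Fobj]
  have hlev : ∀ k, x k ∈ {z : Vec n | Fobj n p lam f z 0 ≤ Fobj n p lam f (x 0) (ε 0)} := by
    intro k
    have h1 : Fobj n p lam f (x k) 0 ≤ φ k := by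
      simp only [Fobj, hφ, Pi.zero_apply, add_zero]
      have hsum : ∑ i, |x k i| ^ p ≤ ∑ i, (|x k i| + ε k i) ^ p := by
        apply Finset.sum_le_sum
        intro i _
        have : |x k i| ≤ |x k i| + ε k i := by linarith [hεpos k i]
        exact Real.rpow_le_rpow (abs_nonneg _) this H.hp0.le
      have h2 : lam * ∑ i, |x k i| ^ p ≤ lam * ∑ i, (|x k i| + ε k i) ^ p :=
        mul_le_mul_of_nonneg_left hsum H.hlam.le
      nlinarith [sq_nonneg ‖x k - x (k - 1)‖]
    exact Set.mem_setOf.mpr (by rw [← hφ0]; exact h1.trans (hmon k))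
  obtain ⟨R, hR⟩ := isBounded_iff_forall_norm_le.mp H.hlevel
  refine ⟨f 0 - ‖gradient f 0‖ * R, fun k => ?_⟩
  have hgi := grad_ineq f H.hconv H.hdiff 0 (x k)
  have hip : -(‖gradient f 0‖ * ‖x k - 0‖) ≤ ⟪gradient f 0, x k - 0⟫_ℝ := by
    have h2 := real_inner_le_norm (gradient f 0) (-(x k - 0))
    rw [inner_neg_right, norm_neg] at h2
    linarith
  have hxR : ‖x k - 0‖ ≤ R := by
    rw [sub_zero]
    exact hR _ (hlev k)
  have : ‖gradient f 0‖ * ‖x k - 0‖ ≤ ‖gradient f 0‖ * R :=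
    mul_le_mul_of_nonneg_left hxR (norm_nonneg _)
  linarith

lemma normOn_sq {n : ℕ} (Istar : Finset (Fin n)) (v : Fin n → ℝ) :
    normOn Istar v ^ 2 = ∑ i ∈ Istar, v i ^ 2 :=
  Real.sq_sqrt (Finset.sum_nonneg fun i _ => sq_nonneg _)

lemma norm_sq_eq_sum {n : ℕ} (v : Vec n) : ‖v‖ ^ 2 = ∑ i, v i ^ 2 := by
  rw [EuclideanSpace.norm_eq, Real.sq_sqrt (Finset.sum_nonneg fun i _ => sq_nonneg _)]
  simp [sq_abs]



lemma embedI_eq {n : ℕ} (Istar : Finset (Fin n)) (v : Vec n)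
    (hv : ∀ i, i ∉ Istar → v i = 0) :
    embedI Istar (fun i => v i.1) = v := by
  ext i
  by_cases h : i ∈ Istar
  · simp [embedI, h]
  · simp [embedI, h, hv i h]

lemma redPsi_zpt_eq {n : ℕ} (p lam β : ℝ) (f : Vec n → ℝ) (Istar : Finset (Fin n))
    (x : ℕ → Vec n) (ε : ℕ → Fin n → ℝ) (k : ℕ)
    (hx : ∀ i, i ∉ Istar → x k i = 0) (hε : ∀ i, 0 ≤ ε k i) :
    redPsi n p lam β f Istar (zpt Istar x ε k)
      = f (x k) + lam * ∑ i ∈ Istar, (|x k i| + ε k i) ^ p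
        + β / 2 * ∑ i ∈ Istar, (x k i - x (k - 1) i) ^ 2 := by
  simp only [redPsi, zpt, Sum.elim_inl, Sum.elim_inr]
  rw [embedI_eq Istar (x k) hx]
  congr 1
  · congr 2
    · rw [← Finset.sum_coe_sort Istar (fun i => (|x k i| + ε k i) ^ p)]
      congr 1
      funext i
      rw [Real.sq_sqrt (hε i.1)]
  · congr 1
    rw [← Finset.sum_coe_sort Istar (fun i => (x k i - x (k - 1) i) ^ 2)]

lemma sum_sq_restrict {n : ℕ} (Istar : Finset (Fin n)) (u v : Vec n)
    (hu : ∀ i, i ∉ Istar → u i = 0) (hv : ∀ i, i ∉ Istar → v i = 0) :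
    ∑ i ∈ Istar, (u i - v i) ^ 2 = ‖u - v‖ ^ 2 := by
  rw [norm_sq_eq_sum]
  apply Finset.sum_subset (Finset.subset_univ Istar)
  intro i _ hi
  rw [hu i hi, hv i hi]
  norm_num


/-- Lemma 3.2(ii)–(iii): with `D₂ = β(1 − ᾱ²)/2 > 0`, the values of the reduced
merit function decrease monotonically (with a `D₂`-sufficient decrease) for all
sufficiently large `k`, converge to a limit `ζ`, and
`ψ(x*_{I*}, x*_{I*}, 0_{I*}) = ζ` at every cluster point `x*` of `{xᵏ}`. -/
theorem stmt_16 (n : ℕ) (p lam β Lf μ αbar : ℝ) (f : Vec n → ℝ)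
    (x y : ℕ → Vec n) (ε : ℕ → Fin n → ℝ) (α : ℕ → ℝ)
    (H : EIRL1 n p lam β Lf μ αbar f x y ε α)
    (K : ℕ) (Istar : Finset (Fin n))
    (hsupp : ∀ k > K, ∀ i, i ∈ Istar ↔ x k i ≠ 0) :
    (0 : ℝ) < β * (1 - αbar ^ 2) / 2 ∧
    (∃ N : ℕ, ∀ k ≥ N,
      redPsi n p lam β f Istar (zpt Istar x ε (k + 1))
          ≤ redPsi n p lam β f Istar (zpt Istar x ε k) ∧
      redPsi n p lam β f Istar (zpt Istar x ε k)
          - redPsi n p lam β f Istar (zpt Istar x ε (k + 1))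
        ≥ β * (1 - αbar ^ 2) / 2 * (normOn Istar (fun i => x k i - x (k - 1) i)) ^ 2) ∧
    ∃ ζ : ℝ,
      Tendsto (fun k => redPsi n p lam β f Istar (zpt Istar x ε k)) atTop (nhds ζ) ∧
      ∀ xstar : Vec n, MapClusterPt xstar atTop x →
        redPsi n p lam β f Istar (zstarPt Istar xstar) = ζ := by
  have hεpos := eps_pos H
  have hβpos : 0 < β := lt_of_le_of_lt H.hLf H.hβ
  have hα2 : αbar ^ 2 < 1 := by nlinarith [H.hαbar0, H.hαbar1]
  have hD2 : (0:ℝ) < β * (1 - αbar ^ 2) / 2 := by nlinarith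
  set D2 := β * (1 - αbar ^ 2) / 2 with hD2def
  set a : ℕ → ℝ := fun k => redPsi n p lam β f Istar (zpt Istar x ε k) with ha
  have hxz : ∀ k, K < k → ∀ i, i ∉ Istar → x k i = 0 := by
    intro k hk i hi
    by_contra h
    exact hi ((hsupp k hk i).mpr h)
  have hid : ∀ k, K < k → a k
      = f (x k) + lam * ∑ i ∈ Istar, (|x k i| + ε k i) ^ p
        + β / 2 * ∑ i ∈ Istar, (x k i - x (k - 1) i) ^ 2 :=
    fun k hk => redPsi_zpt_eq p lam β f Istar x ε k (hxz k hk) (fun i => (hεpos k i).le)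
  set N := K + 2 with hNdef
  -- the sufficient decrease
  have hdec : ∀ k, N ≤ k →
      D2 * (normOn Istar (fun i => x k i - x (k - 1) i)) ^ 2 ≤ a k - a (k + 1) := by
    intro k hk
    have hkK : K < k := by omega
    have hk1K : K < k + 1 := by omega
    have hkm : K < k - 1 := by omega
    have hsum1 : ∑ i ∈ Istar, (x k i - x (k - 1) i) ^ 2 = ‖x k - x (k - 1)‖ ^ 2 :=
      sum_sq_restrict Istar _ _ (hxz k hkK) (hxz (k - 1) hkm)
    have he : (k + 1 : ℕ) - 1 = k := rfl
    have hsum2 : ∑ i ∈ Istar, (x (k + 1) i - x ((k + 1) - 1) i) ^ 2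
        = ‖x (k + 1) - x k‖ ^ 2 := by
      rw [he]
      exact sum_sq_restrict Istar _ _ (hxz (k + 1) hk1K) (hxz k hkK)
    have hcore := core_decrease H k Istar (fun i hi => ⟨hxz k hkK i hi, hxz (k + 1) hk1K i hi⟩)
    have hαk : (α k) ^ 2 ≤ αbar ^ 2 := by
      have h0 := H.hα0 k
      have h1 := H.hα1 k
      nlinarith
    have hnn : (0:ℝ) ≤ ‖x k - x (k - 1)‖ ^ 2 := sq_nonneg _
    have hαb : β * (α k) ^ 2 / 2 * ‖x k - x (k - 1)‖ ^ 2
        ≤ β * αbar ^ 2 / 2 * ‖x k - x (k - 1)‖ ^ 2 := by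
      nlinarith [mul_nonneg (mul_nonneg hβpos.le (sub_nonneg.mpr hαk)) hnn]
    rw [hid k hkK, hid (k + 1) hk1K, normOn_sq, hsum1, hsum2]
    have hq : (0:ℝ) ≤ β / 2 * ‖x (k + 1) - x k‖ ^ 2 := by positivity
    rw [hD2def]
    linarith [hcore, hαb]
  -- lower bound
  obtain ⟨C, hC⟩ := bounded_below H
  have hlb : ∀ k, K < k → C ≤ a k := by
    intro k hk
    rw [hid k hk]
    have h1 : (0:ℝ) ≤ lam * ∑ i ∈ Istar, (|x k i| + ε k i) ^ p := by
      apply mul_nonneg H.hlam.le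
      apply Finset.sum_nonneg
      intro i _
      exact Real.rpow_nonneg (add_nonneg (abs_nonneg _) (hεpos k i).le) _
    have h2 : (0:ℝ) ≤ β / 2 * ∑ i ∈ Istar, (x k i - x (k - 1) i) ^ 2 := by
      apply mul_nonneg (by positivity)
      exact Finset.sum_nonneg fun i _ => sq_nonneg _
    linarith [hC k]
  -- monotone convergence
  set b : ℕ → ℝ := fun j => a (j + N) with hb
  have hbanti : Antitone b := by
    apply antitone_nat_of_succ_le
    intro j
    have := hdec (j + N) (by omega)
    have hnn : (0:ℝ) ≤ D2 * (normOn Istar (fun i => x (j + N) i - x (j + N - 1) i)) ^ 2 := by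
      positivity
    have he : j + 1 + N = (j + N) + 1 := by omega
    rw [hb]
    simp only [he]
    linarith
  have hbbdd : BddBelow (Set.range b) := by
    refine ⟨C, ?_⟩
    rintro _ ⟨j, rfl⟩
    exact hlb (j + N) (by omega)
  have htb : Tendsto b atTop (nhds (⨅ j, b j)) := tendsto_atTop_ciInf hbanti hbbdd
  set ζ := ⨅ j, b j with hζ
  have hta : Tendsto a atTop (nhds ζ) := (tendsto_add_atTop_iff_nat N).mp htb
  refine ⟨hD2, ⟨N, fun k hk => ?_⟩, ζ, hta, ?_⟩
  · constructor
    · have h1 := hdec k hk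
      have h2 : (0:ℝ) ≤ D2 * (normOn Istar (fun i => x k i - x (k - 1) i)) ^ 2 := by positivity
      linarith
    · exact hdec k hk
  -- cluster points
  intro xstar hcl
  obtain ⟨φ, hφmono, hφlim⟩ := TopologicalSpace.FirstCountableTopology.tendsto_subseq hcl
  have hφtop : Tendsto φ atTop atTop := hφmono.tendsto_atTop
  have hcoord : ∀ i : Fin n, Tendsto (fun j => x (φ j) i) atTop (nhds (xstar i)) := by
    intro i
    have hcont : Continuous (fun v : Vec n => v i) := by fun_prop
    exact (hcont.tendsto xstar).comp hφlim
  -- epsilon tends to zero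
  have hεlim : ∀ i, Tendsto (fun k => ε k i) atTop (nhds 0) := by
    intro i
    have hgeo : ∀ k, ε k i ≤ μ ^ k * ε 0 i := by
      intro k
      induction k with
      | zero => simp
      | succ m ih =>
        calc ε (m + 1) i ≤ μ * ε m i := H.hεdec m i
          _ ≤ μ * (μ ^ m * ε 0 i) := mul_le_mul_of_nonneg_left ih H.hμ0.le
          _ = μ ^ (m + 1) * ε 0 i := by ring
    have hg : Tendsto (fun k => μ ^ k * ε 0 i) atTop (nhds 0) := by
      have := (tendsto_pow_atTop_nhds_zero_of_lt_one H.hμ0.le H.hμ1).mul_const (ε 0 i)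
      simpa using this
    exact squeeze_zero (fun k => (hεpos k i).le) hgeo hg
  -- differences tend to zero
  have hdiff0 : Tendsto (fun k => a k - a (k + 1)) atTop (nhds 0) := by
    have h1 : Tendsto (fun k => a (k + 1)) atTop (nhds ζ) :=
      (tendsto_add_atTop_iff_nat 1).mpr hta
    simpa using hta.sub h1
  have hsumsq0 : Tendsto (fun k => ∑ i ∈ Istar, (x k i - x (k - 1) i) ^ 2) atTop (nhds 0) := by
    have hg : Tendsto (fun k => (a k - a (k + 1)) / D2) atTop (nhds 0) := by
      simpa using hdiff0.div_const D2
    apply squeeze_zero' (Filter.Eventually.of_forall fun k =>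
      Finset.sum_nonneg fun i _ => sq_nonneg _) _ hg
    filter_upwards [Filter.eventually_ge_atTop N] with k hk
    have h1 := hdec k hk
    rw [normOn_sq] at h1
    rw [le_div_iff₀ hD2]
    linarith [h1]
  have hdiffc : ∀ i ∈ Istar, Tendsto (fun k => x k i - x (k - 1) i) atTop (nhds 0) := by
    intro i hi
    have hsq : Tendsto (fun k => (x k i - x (k - 1) i) ^ 2) atTop (nhds 0) := by
      apply squeeze_zero (fun k => sq_nonneg _) _ hsumsq0
      intro k
      exact Finset.single_le_sum (fun j _ => sq_nonneg ((x k j - x (k - 1) j))) hi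
    have habs : Tendsto (fun k => |x k i - x (k - 1) i|) atTop (nhds 0) := by
      have := (Real.continuous_sqrt.tendsto 0).comp hsq
      simp only [Function.comp_def, Real.sqrt_sq_eq_abs, Real.sqrt_zero] at this
      exact this
    exact (tendsto_zero_iff_abs_tendsto_zero _).mpr habs
  -- xstar vanishes outside Istar
  have hxstar0 : ∀ i, i ∉ Istar → xstar i = 0 := by
    intro i hi
    have hev : ∀ᶠ j in atTop, x (φ j) i = 0 := by
      filter_upwards [Filter.eventually_ge_atTop (K + 1)] with j hj
      exact hxz (φ j) (by have := hφmono.le_apply (x := j); omega) i hi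
    have h0 : Tendsto (fun j => x (φ j) i) atTop (nhds 0) :=
      Tendsto.congr' (Filter.EventuallyEq.symm hev) tendsto_const_nhds
    exact tendsto_nhds_unique (hcoord i) h0
  -- value at the limit point
  have hzstar : redPsi n p lam β f Istar (zstarPt Istar xstar)
      = f xstar + lam * ∑ i ∈ Istar, |xstar i| ^ p := by
    simp only [redPsi, zstarPt, Sum.elim_inl, Sum.elim_inr]
    rw [embedI_eq Istar xstar hxstar0]
    have h3 : ∑ i : {i // i ∈ Istar}, (xstar i.1 - xstar i.1) ^ 2 = 0 := by simp
    have h2 : ∑ i : {i // i ∈ Istar}, (|xstar i.1| + (0:ℝ) ^ 2) ^ p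
        = ∑ i ∈ Istar, |xstar i| ^ p := by
      rw [← Finset.sum_coe_sort Istar (fun i => |xstar i| ^ p)]
      congr 1
      funext i
      norm_num
    rw [h2, h3]
    ring
  -- limit of a along the subsequence
  have haφζ : Tendsto (fun j => a (φ j)) atTop (nhds ζ) := hta.comp hφtop
  have haφval : Tendsto (fun j => a (φ j)) atTop
      (nhds (f xstar + lam * ∑ i ∈ Istar, |xstar i| ^ p)) := by
    have hE : Tendsto (fun j =>
        f (x (φ j)) + lam * ∑ i ∈ Istar, (|x (φ j) i| + ε (φ j) i) ^ p
          + β / 2 * ∑ i ∈ Istar, (x (φ j) i - x (φ j - 1) i) ^ 2) atTop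
        (nhds (f xstar + lam * ∑ i ∈ Istar, |xstar i| ^ p + β / 2 * 0)) := by
      apply Tendsto.add
      apply Tendsto.add
      · exact (H.hdiff.continuous.tendsto xstar).comp hφlim
      · apply Tendsto.const_mul
        apply tendsto_finset_sum
        intro i _
        have hbase : Tendsto (fun j => |x (φ j) i| + ε (φ j) i) atTop (nhds (|xstar i|)) := by
          have h1 : Tendsto (fun j => |x (φ j) i|) atTop (nhds (|xstar i|)) :=
            (continuous_abs.tendsto _).comp (hcoord i)
          have h2 : Tendsto (fun j => ε (φ j) i) atTop (nhds 0) := (hεlim i).comp hφtop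
          simpa using h1.add h2
        have hrpow := (Real.continuousAt_rpow_const (|xstar i|) p (Or.inr H.hp0.le)).tendsto
        exact hrpow.comp hbase
      · exact (hsumsq0.comp hφtop).const_mul (β / 2)
    have hEq : ∀ᶠ j in atTop, a (φ j)
        = f (x (φ j)) + lam * ∑ i ∈ Istar, (|x (φ j) i| + ε (φ j) i) ^ p
          + β / 2 * ∑ i ∈ Istar, (x (φ j) i - x (φ j - 1) i) ^ 2 := by
      filter_upwards [Filter.eventually_ge_atTop (K + 1)] with j hj
      exact hid (φ j) (by have := hφmono.le_apply (x := j); omega)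
    have := hE.congr' (Filter.EventuallyEq.symm hEq)
    simpa using this
  rw [hzstar]
  exact tendsto_nhds_unique haφval haφζ
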